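/- Let (V,g) be a pseudo-Euclidean vector space and F a curvature-like map on V. If the sectional value k(z,w) = F(z,w,z,w) / (g(z,z)g(w,w) - g(z,w)²) is equal to a constant k for every non-degenerate 2-plane span{z,w}, then F(x,y,z,w) = k (g(x,z)g(y,w) - g(y,z)g(x,w)) for all x,y,z,w ∈ V. -/

import Mathlib

open Polynomial


set_option maxHeartbeats 1000000 in
/-- Let `(V,g)` be a (finite-dimensional) pseudo-Euclidean vector space
(`g` a nondegenerate symmetric bilinear form) and `F` a curvature-like map on `V`.  If the
sectional value `k(z,w) = F(z,w,z,w) / (g(z,z)g(w,w) - g(z,w)²)` equals a constant `k` for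
every non-degenerate 2-plane `span{z,w}`, then
`F(x,y,z,w) = k (g(x,z)g(y,w) - g(y,z)g(x,w))` for all `x,y,z,w ∈ V`. -/
theorem curvature_like_constant_sectional {V : Type*} [AddCommGroup V] [Module ℝ V]
    [FiniteDimensional ℝ V]
    (g : V →ₗ[ℝ] V →ₗ[ℝ] ℝ)
    (hsym : ∀ x y, g x y = g y x)
    (hnondeg : ∀ x, (∀ y, g x y = 0) → x = 0)
    (F : V →ₗ[ℝ] V →ₗ[ℝ] V →ₗ[ℝ] V →ₗ[ℝ] ℝ)
    (halt : ∀ x y z w, F y x z w = -F x y z w)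
    (hpair : ∀ x y z w, F z w x y = F x y z w)
    (hbianchi : ∀ x y z w, F x y z w + F x z w y + F x w y z = 0)
    (k : ℝ)
    (hk : ∀ z w, g z z * g w w - (g z w) ^ 2 ≠ 0 →
      F z w z w = k * (g z z * g w w - (g z w) ^ 2)) :
    ∀ x y z w, F x y z w = k * (g x z * g y w - g y z * g x w) := by
  -- basic consequences
  have hFxx : ∀ x z w, F x x z w = 0 := by
    intro x z w; have := halt x x z w; linarith
  have hFzz : ∀ x y z, F x y z z = 0 := by
    intro x y z; rw [← hpair]; exact hFxx z x y
  have haltlast : ∀ x y z w, F x y w z = -F x y z w := by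
    intro x y z w; rw [← hpair, halt, hpair]
  -- STEP 1: key quadratic identity for all z w
  have key : ∀ z w, F z w z w = k * (g z z * g w w - (g z w) ^ 2) := by
    intro z w
    by_cases hQ : g z z * g w w - (g z w) ^ 2 ≠ 0
    · exact hk z w hQ
    push_neg at hQ
    rw [hQ, mul_zero]
    by_cases hex : ∃ p q, g p p * g q q - (g p q) ^ 2 ≠ 0
    · -- polynomial perturbation argument
      obtain ⟨p, q, hpq⟩ := hex
      set u := p - z with hu
      set v := q - w with hv
      set A : ℝ[X] := C (g z z) + C (2 * g z u) * X + C (g u u) * X ^ 2 with hA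
      set B : ℝ[X] := C (g z w) + C (g z v + g u w) * X + C (g u v) * X ^ 2 with hB
      set D : ℝ[X] := C (g w w) + C (2 * g w v) * X + C (g v v) * X ^ 2 with hD
      set Qp : ℝ[X] := A * D - B ^ 2 with hQp
      set Fp : ℝ[X] := C (F z w z w)
        + C (F u w z w + F z v z w + F z w u w + F z w z v) * X
        + C (F u v z w + F u w u w + F u w z v + F z v u w + F z v z v + F z w u v) * X ^ 2
        + C (F u v u w + F u v z v + F u w u v + F z v u v) * X ^ 3
        + C (F u v u v) * X ^ 4 with hFp
      have hQe : ∀ t : ℝ, Qp.eval t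
          = g (z + t • u) (z + t • u) * g (w + t • v) (w + t • v)
            - (g (z + t • u) (w + t • v)) ^ 2 := by
        intro t
        simp only [hQp, hA, hB, hD, eval_add, eval_mul, eval_pow, eval_C, eval_X, eval_sub,
          map_add, map_smul, LinearMap.add_apply, LinearMap.smul_apply, smul_eq_mul]
        rw [hsym u z, hsym v w]
        ring
      have hFe : ∀ t : ℝ, Fp.eval t
          = F (z + t • u) (w + t • v) (z + t • u) (w + t • v) := by
        intro t
        simp only [hFp, eval_add, eval_mul, eval_pow, eval_C, eval_X,
          map_add, map_smul, LinearMap.add_apply, LinearMap.smul_apply, smul_eq_mul]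
        ring
      have hQp1 : Qp.eval 1 ≠ 0 := by
        rw [hQe 1]
        have hz : z + (1 : ℝ) • u = p := by rw [hu]; module
        have hw : w + (1 : ℝ) • v = q := by rw [hv]; module
        rw [hz, hw]; exact hpq
      have hQpne : Qp ≠ 0 := fun h => hQp1 (by rw [h, eval_zero])
      have hprod : (Fp - C k * Qp) * Qp = 0 := by
        apply Polynomial.funext
        intro t
        rw [eval_zero, eval_mul, eval_sub, eval_mul, eval_C]
        by_cases ht : Qp.eval t = 0
        · rw [ht, mul_zero]
        · have := hk (z + t • u) (w + t • v) (by rw [← hQe]; exact ht)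
          rw [hFe, this, ← hQe, sub_self, zero_mul]
      have hFk : Fp - C k * Qp = 0 := by
        rcases mul_eq_zero.mp hprod with h | h
        · exact h
        · exact absurd h hQpne
      have h0 : Fp.eval 0 - k * Qp.eval 0 = 0 := by
        have := congrArg (eval 0) hFk
        simpa using this
      have hF0 : Fp.eval 0 = F z w z w := by
        have := hFe 0
        simpa using this
      have hQ0 : Qp.eval 0 = g z z * g w w - (g z w) ^ 2 := by
        have := hQe 0
        simpa using this
      rw [hF0, hQ0, hQ] at h0
      linarith
    · -- all planes degenerate: V is essentially 1-dimensional
      push_neg at hex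
      by_cases ha : ∃ a, g a a ≠ 0
      · obtain ⟨a, ha⟩ := ha
        -- every vector is a multiple of a
        have hmul : ∀ b : V, b = (g a b / g a a) • a := by
          intro b
          have hb' : ∀ y : V, g (b - (g a b / g a a) • a) y = 0 := by
            intro y
            set b' := b - (g a b / g a a) • a with hb'def
            have hb'a : g b' a = 0 := by
              simp only [hb'def, map_sub, map_smul, LinearMap.sub_apply, LinearMap.smul_apply,
                smul_eq_mul]
              rw [hsym b a]
              field_simp
              ring
            have hb'b' : g b' b' = 0 := by
              have h1 := hex a b
              have h2 : g b b = (g a b) ^ 2 / g a a := by field_simp; linarith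
              simp only [hb'def, map_sub, map_smul, LinearMap.sub_apply, LinearMap.smul_apply,
                smul_eq_mul]
              rw [hsym b a, h2]
              field_simp
              ring
            set y' := y - (g a y / g a a) • a with hy'def
            have hy'y' : g y' y' = 0 := by
              have h1 := hex a y
              have h2 : g y y = (g a y) ^ 2 / g a a := by field_simp; linarith
              simp only [hy'def, map_sub, map_smul, LinearMap.sub_apply, LinearMap.smul_apply,
                smul_eq_mul]
              rw [hsym y a, h2]
              field_simp
              ring
            have hb'y' : g b' y' = 0 := by
              have h1 := hex b' y'
              have : (g b' y') ^ 2 = 0 := by rw [hb'b', zero_mul] at h1; linarith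
              exact pow_eq_zero_iff (by norm_num) |>.mp this
            have : g b' y = g b' y' + (g a y / g a a) * g b' a := by
              simp only [hy'def, map_sub, map_smul, smul_eq_mul]
              ring
            rw [this, hb'y', hb'a]; ring
          exact sub_eq_zero.mp (hnondeg _ hb')
        have hz := hmul z
        have hw := hmul w
        rw [hz, hw]
        simp only [map_smul, LinearMap.smul_apply, smul_eq_mul]
        rw [hFxx]
        ring
      · -- g x x = 0 for all x ⇒ g ≡ 0 ⇒ V = 0
        push_neg at ha
        have hall : ∀ x y : V, g x y = 0 := by
          intro x y
          have h1 := ha (x + y)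
          have h2 := ha x
          have h3 := ha y
          simp only [map_add, LinearMap.add_apply] at h1
          rw [hsym y x] at h1
          linarith
        have hz0 : z = 0 := hnondeg z (hall z)
        rw [hz0]
        simp
  -- STEP 2: polarization
  have key3 : ∀ x z w, F x w z w = k * (g x z * g w w - g w z * g x w) := by
    intro x z w
    have h1 := key (x + z) w
    have h2 := key x w
    have h3 := key z w
    have hp := hpair z w x w
    simp only [map_add, LinearMap.add_apply] at h1
    linear_combination ((k / 2) * g w w) * hsym z x + (k * g x w) * hsym w z
      + (1 / 2 : ℝ) * h1 - (1 / 2 : ℝ) * h2 - (1 / 2 : ℝ) * h3 + (1 / 2 : ℝ) * hp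
  have key4 : ∀ x y z w, F x y z w + F x w z y
      = k * ((g x z * g y w - g y z * g x w) + (g x z * g w y - g w z * g x y)) := by
    intro x y z w
    have h1 := key3 x z (y + w)
    have h2 := key3 x z y
    have h3 := key3 x z w
    simp only [map_add, LinearMap.add_apply] at h1
    linear_combination h1 - h2 - h3
  intro x y z w
  -- D x y z w := F x y z w - k * S, cyclic in (y,z,w), Bianchi gives 3D = 0
  have e1 := key4 x y z w
  have e2 := key4 x z w y
  have e3 := key4 x w y z
  have b := hbianchi x y z w
  have a1 := haltlast x w z y
  have a2 := haltlast x y w z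
  linear_combination (1 / 3 : ℝ) * b + (1 / 3 : ℝ) * e1 - (1 / 3 : ℝ) * e2
    - (1 / 3 : ℝ) * a1 + (1 / 3 : ℝ) * a2
    + ((k / 3) * g x z) * hsym w y + ((k / 3) * g x w) * hsym y z
    + ((k / 3) * g x y) * hsym z w
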